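/- Let n be sufficiently large, r ≥ (ln ln n)^2, and let G' be a bipartite graph with parts X and Y each of size n such that (i) every vertex degree lies strictly between r − 4r/ln ln n and r + 4r/ln ln n, and (ii) for any sets A ⊆ X, B ⊆ Y with |A|, |B| ≤ 0.6n, the number of edges between A and B is at most 0.8 r √(|A||B|). Then G' contains a spanning k-regular subgraph for some k ≥ r − 100r/ln ln n. -/

import Mathlib

/-- Number of edges of a bipartite graph (given by the relation `B` between the
two parts) between a set `A` in the left part and a set `B'` in the right part. -/
noncomputable def bipEdges {n : ℕ} (B : Fin n → Fin n → Prop)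
    (A B' : Finset (Fin n)) : ℕ :=
  Set.ncard {x : Fin n × Fin n | x.1 ∈ A ∧ x.2 ∈ B' ∧ B x.1 x.2}


namespace OreRyserAux
open Finset
open scoped Classical

variable {n : ℕ} (B : Fin n → Fin n → Prop) (d : ℕ)

/-- Edge type of the bipartite graph. -/
def ET (B : Fin n → Fin n → Prop) : Type := {p : Fin n × Fin n // B p.1 p.2}
noncomputable instance : Fintype (ET B) := by unfold ET; infer_instance
noncomputable instance : DecidableEq (ET B) := Classical.decEq _
noncomputable def degL (u : Fin n) : ℕ := #(univ.filter fun v => B u v)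
noncomputable def degR (v : Fin n) : ℕ := #(univ.filter fun u => B u v)


lemma sum_eT_eq (S : Finset (Fin n)) :
    ∑ x, #(S.filter fun y => B x y) = ∑ y ∈ S, degR B y := by
  have h1 : ∀ x, #(S.filter fun y => B x y) = ∑ y ∈ S, if B x y then 1 else 0 := by
    intro x; rw [card_filter]
  have h2 : ∀ y, degR B y = ∑ x : Fin n, if B x y then 1 else 0 := by
    intro y; rw [degR, card_filter]
  simp only [h1, h2]
  exact Finset.sum_comm
lemma filter_split (T : Finset (Fin n)) (x : Fin n) :
    #(T.filter fun y => B x y) + #(Tᶜ.filter fun y => B x y) = degL B x := by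
  rw [degL, ← card_union_of_disjoint (disjoint_filter_filter disjoint_compl_right),
    ← filter_union, union_compl]
lemma ncard_degL (u : Fin n) : Set.ncard {v | B u v} = degL B u := by
  rw [degL, ← Set.ncard_coe_finset]
  congr 1
  ext v; simp
lemma ncard_degR (v : Fin n) : Set.ncard {u | B u v} = degR B v := by
  rw [degR, ← Set.ncard_coe_finset]
  congr 1
  ext u; simp

lemma bipEdges_eq (A B' : Finset (Fin n)) :
    bipEdges B A B' = ∑ x ∈ A, #(B'.filter fun y => B x y) := by
  have h0 : {x : Fin n × Fin n | x.1 ∈ A ∧ x.2 ∈ B' ∧ B x.1 x.2}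
      = ↑((A ×ˢ B').filter fun p => B p.1 p.2) := by
    ext p
    simp only [Set.mem_setOf_eq, coe_filter, mem_product, Set.mem_setOf_eq]
    tauto
  rw [bipEdges, h0, Set.ncard_coe_finset]
  rw [card_eq_sum_card_fiberwise (f := Prod.fst) (s := (A ×ˢ B').filter fun p => B p.1 p.2) (t := A)
    (fun p hp => (mem_product.mp (mem_filter.mp hp).1).1)]
  refine Finset.sum_congr rfl fun x hx => ?_
  refine card_bij' (fun p _ => p.2) (fun y hy => (x, y)) ?_ ?_ ?_ ?_
  · intro p hp
    simp only [mem_filter, mem_product] at hp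
    obtain ⟨⟨⟨-, h1⟩, h2⟩, h3⟩ := hp
    rw [mem_filter]
    exact ⟨h1, h3 ▸ h2⟩
  · intro y hy
    rw [mem_filter] at hy
    simp only [mem_filter, mem_product]
    exact ⟨⟨⟨hx, hy.1⟩, hy.2⟩, trivial⟩
  · intro p hp
    simp only [mem_filter, mem_product] at hp
    exact Prod.ext hp.2.symm rfl
  · intro y hy; rfl


set_option maxHeartbeats 1000000 in
lemma orc_main (r L : ℝ) (d : ℕ) (hn : (10:ℝ) ≤ n)
    (hL : (10^6:ℝ) ≤ L) (hr : L^2 ≤ r)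
    (hd1 : r - 99*(r/L) ≤ (d:ℝ)) (hd2 : (d:ℝ) ≤ r - 98*(r/L))
    (hdegL : ∀ u, r - 4*(r/L) < (degL B u : ℝ) ∧ (degL B u : ℝ) < r + 4*(r/L))
    (hdegR : ∀ v, r - 4*(r/L) < (degR B v : ℝ) ∧ (degR B v : ℝ) < r + 4*(r/L))
    (hexp : ∀ A B' : Finset (Fin n), (#A : ℝ) ≤ 0.6*n → (#B' : ℝ) ≤ 0.6*n →
      ((∑ x ∈ A, #(B'.filter fun y => B x y) : ℕ) : ℝ) ≤ 0.8*r*Real.sqrt ((#A) * (#B')))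
    (T : Finset (Fin n)) : d * #T ≤ ∑ x, min d #(T.filter fun y => B x y) := by
  have hL0 : (0:ℝ) < L := by linarith
  have hr0 : (0:ℝ) < r := by nlinarith
  set q := r / L with hqdef
  have hq0 : 0 < q := div_pos hr0 hL0
  have hqL : q * L = r := div_mul_cancel₀ r (ne_of_gt hL0)
  have hq1 : 103 * q ≤ 0.001 * r := by nlinarith
  have hdlow : 0.99 * r ≤ (d:ℝ) := by nlinarith
  have hgap1 : 94 * q ≤ r - 4*q - (d:ℝ) := by linarith
  have hgap2 : r + 4*q - (d:ℝ) ≤ 103 * q := by linarith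
  have hgap3 : (0:ℝ) ≤ r + 4*q - (d:ℝ) := by linarith
  have heTle : ∀ (S : Finset (Fin n)) x, #(S.filter fun y => B x y) ≤ degL B x := fun S x =>
    card_le_card (filter_subset_filter _ (subset_univ S))
  rw [← @Nat.cast_le ℝ]
  push_cast
  by_cases hm : (#T:ℝ) ≤ 0.6 * n
  · -- small case
    have hm0 : (0:ℝ) ≤ (#T:ℝ) := Nat.cast_nonneg _
    set A := univ.filter (fun x => d ≤ #(T.filter fun y => B x y)) with hA
    have ha0 : (0:ℝ) ≤ (#A:ℝ) := Nat.cast_nonneg _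
    have hdaE : (d:ℝ) * (#A:ℝ) ≤ ∑ x ∈ A, (#(T.filter fun y => B x y) : ℝ) := by
      have h1 : ∑ _x ∈ A, (d:ℝ) ≤ ∑ x ∈ A, (#(T.filter fun y => B x y) : ℝ) := by
        refine Finset.sum_le_sum fun x hx => ?_
        have h2 := (mem_filter.mp hx).2
        exact_mod_cast h2
      rw [Finset.sum_const, nsmul_eq_mul] at h1
      linarith [h1]
    have haN : (#A:ℝ) ≤ 0.6 * n := by
      by_contra hcon
      push_neg at hcon
      set k := ⌊0.6 * (n:ℝ)⌋₊ with hk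
      have hkr : (k:ℝ) ≤ 0.6 * n := Nat.floor_le (by positivity)
      have hkr2 : 0.6 * (n:ℝ) - 1 ≤ (k:ℝ) := by
        have h5 := Nat.lt_floor_add_one (0.6 * (n:ℝ))
        rw [← hk] at h5
        linarith
      have hkA : k ≤ #A := by
        rw [← @Nat.cast_le ℝ]
        linarith
      obtain ⟨A₀, hA₀sub, hA₀card⟩ := Finset.exists_subset_card_eq hkA
      have hexp0 := hexp A₀ T (by rw [hA₀card]; exact hkr) hm
      push_cast at hexp0
      rw [hA₀card] at hexp0
      have hlow : (d:ℝ) * (k:ℝ) ≤ ∑ x ∈ A₀, (#(T.filter fun y => B x y) : ℝ) := by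
        have h1 : ∑ _x ∈ A₀, (d:ℝ) ≤ ∑ x ∈ A₀, (#(T.filter fun y => B x y) : ℝ) := by
          refine Finset.sum_le_sum fun x hx => ?_
          have h2 := (mem_filter.mp (hA₀sub hx)).2
          exact_mod_cast h2
        rw [Finset.sum_const, hA₀card, nsmul_eq_mul] at h1
        linarith [h1]
      have hsq : Real.sqrt ((k:ℝ) * (#T:ℝ)) ≤ 0.6 * n := by
        have h1 : (k:ℝ) * (#T:ℝ) ≤ (0.6*(n:ℝ))^2 := by nlinarith
        calc Real.sqrt ((k:ℝ) * (#T:ℝ)) ≤ Real.sqrt ((0.6*(n:ℝ))^2) := Real.sqrt_le_sqrt h1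
        _ = 0.6*(n:ℝ) := Real.sqrt_sq (by positivity)
      have hfin : (d:ℝ) * (k:ℝ) ≤ 0.8*r*(0.6*n) := by
        refine hlow.trans (hexp0.trans ?_)
        have := Real.sqrt_nonneg ((k:ℝ)*(#T:ℝ))
        nlinarith
      have hcontra : 0.99*r*(0.6*(n:ℝ)-1) ≤ (d:ℝ)*(k:ℝ) :=
        mul_le_mul hdlow hkr2 (by linarith) (by positivity)
      nlinarith
    have hexpA := hexp A T haN hm
    push_cast at hexpA
    have ha66 : (#A:ℝ) ≤ 0.66 * (#T:ℝ) := by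
      rcases eq_or_lt_of_le ha0 with h | hapos
      · rw [← h]; positivity
      · have hda : (d:ℝ)*(#A:ℝ) ≤ 0.8*r*Real.sqrt ((#A:ℝ)*(#T:ℝ)) := hdaE.trans hexpA
        have hsq : ((d:ℝ)*(#A:ℝ))*((d:ℝ)*(#A:ℝ))
            ≤ (0.8*r*Real.sqrt ((#A:ℝ)*(#T:ℝ)))*(0.8*r*Real.sqrt ((#A:ℝ)*(#T:ℝ))) :=
          mul_self_le_mul_self (by positivity) hda
        have hss : Real.sqrt ((#A:ℝ)*(#T:ℝ)) * Real.sqrt ((#A:ℝ)*(#T:ℝ)) = (#A:ℝ)*(#T:ℝ) :=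
          Real.mul_self_sqrt (by positivity)
        have hdd : (0.99*r)*(0.99*r) ≤ (d:ℝ)*(d:ℝ) :=
          mul_le_mul hdlow hdlow (by positivity) (by positivity)
        have h1 : (0.99*r)*(0.99*r)*((#A:ℝ)*(#A:ℝ)) ≤ ((d:ℝ)*(d:ℝ))*((#A:ℝ)*(#A:ℝ)) :=
          mul_le_mul_of_nonneg_right hdd (by positivity)
        have h3 : ((d:ℝ)*(#A:ℝ))*((d:ℝ)*(#A:ℝ)) ≤ 0.64*(r*r)*((#A:ℝ)*(#T:ℝ)) := by
          nlinarith [hsq, hss]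
        have h4 : 0.9801*((#A:ℝ)*(#A:ℝ)) ≤ 0.64*((#A:ℝ)*(#T:ℝ)) := by
          have h5 : (r*r) * (0.9801*((#A:ℝ)*(#A:ℝ))) ≤ (r*r) * (0.64*((#A:ℝ)*(#T:ℝ))) := by
            nlinarith [h1, h3]
          exact le_of_mul_le_mul_left h5 (mul_pos hr0 hr0)
        nlinarith [h4, hapos, hm0]
    have key : (∑ x, min d #(T.filter fun y => B x y)) + ∑ x ∈ A, #(T.filter fun y => B x y)
        = d * #A + ∑ y ∈ T, degR B y := by
      rw [← sum_eT_eq B T]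
      rw [← Finset.sum_filter_add_sum_filter_not univ (fun x => d ≤ #(T.filter fun y => B x y))
        (fun x => min d #(T.filter fun y => B x y))]
      rw [← Finset.sum_filter_add_sum_filter_not univ (fun x => d ≤ #(T.filter fun y => B x y))
        (fun x => #(T.filter fun y => B x y))]
      have h1 : ∑ x ∈ A, min d #(T.filter fun y => B x y) = d * #A := by
        rw [Finset.sum_congr rfl (fun x hx => min_eq_left (mem_filter.mp hx).2)]
        rw [Finset.sum_const, smul_eq_mul, mul_comm]
      have h2 : ∑ x ∈ univ.filter (fun x => ¬ d ≤ #(T.filter fun y => B x y)),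
          min d #(T.filter fun y => B x y)
          = ∑ x ∈ univ.filter (fun x => ¬ d ≤ #(T.filter fun y => B x y)),
            #(T.filter fun y => B x y) := by
        refine Finset.sum_congr rfl fun x hx => ?_
        have := (mem_filter.mp hx).2
        exact min_eq_right (by omega)
      rw [h1, h2]
      ring
    have keyR : (∑ x, min (d:ℝ) ((#(T.filter fun y => B x y)):ℝ))
        + ∑ x ∈ A, ((#(T.filter fun y => B x y)):ℝ)
        = (d:ℝ) * (#A:ℝ) + ∑ y ∈ T, ((degR B y):ℝ) := by
      exact_mod_cast key
    have hS : (#T:ℝ) * (r - 4*q) ≤ ∑ y ∈ T, (degR B y:ℝ) := by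
      have h1 : ∑ _y ∈ T, (r - 4*q) ≤ ∑ y ∈ T, (degR B y:ℝ) :=
        Finset.sum_le_sum fun y _ => le_of_lt (hdegR y).1
      rw [Finset.sum_const, nsmul_eq_mul] at h1
      exact h1
    have hE : ∑ x ∈ A, (#(T.filter fun y => B x y):ℝ) ≤ (#A:ℝ) * (r + 4*q) := by
      have h1 : ∑ x ∈ A, (#(T.filter fun y => B x y):ℝ) ≤ ∑ _x ∈ A, (r + 4*q) := by
        refine Finset.sum_le_sum fun x _ => ?_
        have h2 := heTle T x
        have h3 := (hdegL x).2
        have h4 : (#(T.filter fun y => B x y):ℝ) ≤ (degL B x : ℝ) := by exact_mod_cast h2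
        linarith
      rw [Finset.sum_const, nsmul_eq_mul] at h1
      exact h1
    have hprod : (#A:ℝ)*((r+4*q)-(d:ℝ)) ≤ (0.66*(#T:ℝ))*(103*q) :=
      mul_le_mul ha66 hgap2 hgap3 (by positivity)
    have hprod2 : (0.66*(#T:ℝ))*(103*q) ≤ (#T:ℝ)*(94*q) := by nlinarith
    have hprod3 : (#T:ℝ)*(94*q) ≤ (#T:ℝ)*((r-4*q)-(d:ℝ)) := mul_le_mul_of_nonneg_left hgap1 hm0
    have e1 : (#A:ℝ)*((r+4*q)-(d:ℝ)) = (#A:ℝ)*(r+4*q) - (#A:ℝ)*(d:ℝ) := by ring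
    have e2 : (#T:ℝ)*((r-4*q)-(d:ℝ)) = (#T:ℝ)*(r-4*q) - (#T:ℝ)*(d:ℝ) := by ring
    have e3 : (d:ℝ)*(#A:ℝ) = (#A:ℝ)*(d:ℝ) := by ring
    have e4 : (d:ℝ)*(#T:ℝ) = (#T:ℝ)*(d:ℝ) := by ring
    linarith [keyR, hS, hE, hprod, hprod2, hprod3, e1, e2, e3, e4]
  · -- large case
    push_neg at hm
    have hm0 : (0:ℝ) ≤ (#T:ℝ) := Nat.cast_nonneg _
    have hbn0 : (0:ℝ) ≤ (#(Tᶜ):ℝ) := Nat.cast_nonneg _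
    have hbnm : (#(Tᶜ):ℝ) + (#T:ℝ) = n := by
      have h1 : #(Tᶜ) + #T = n := by
        have h2 := card_compl T
        have h3 : #T ≤ Fintype.card (Fin n) := card_le_univ T
        simp only [Fintype.card_fin] at h2 h3
        omega
      exact_mod_cast h1
    have hbn04 : (#(Tᶜ):ℝ) ≤ 0.4 * n := by linarith
    set A := univ.filter (fun x => #(T.filter fun y => B x y) < d) with hA
    have ha0 : (0:ℝ) ≤ (#A:ℝ) := Nat.cast_nonneg _
    have key : (∑ x, min d #(T.filter fun y => B x y)) + d * #A
        = (∑ x ∈ A, #(T.filter fun y => B x y)) + d * n := by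
      rw [← Finset.sum_filter_add_sum_filter_not univ (fun x => #(T.filter fun y => B x y) < d)
        (fun x => min d #(T.filter fun y => B x y))]
      have h1 : ∑ x ∈ A, min d #(T.filter fun y => B x y)
          = ∑ x ∈ A, #(T.filter fun y => B x y) := by
        refine Finset.sum_congr rfl fun x hx => ?_
        have := (mem_filter.mp hx).2
        exact min_eq_right (by omega)
      have h2 : ∑ x ∈ univ.filter (fun x => ¬ #(T.filter fun y => B x y) < d),
          min d #(T.filter fun y => B x y)
          = d * #(univ.filter (fun x => ¬ #(T.filter fun y => B x y) < d)) := by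
        rw [Finset.sum_congr rfl (fun x hx => min_eq_left (by
          have := (mem_filter.mp hx).2
          omega))]
        rw [Finset.sum_const, smul_eq_mul, mul_comm]
      rw [h1, h2]
      have h3 : #A + #(univ.filter (fun x => ¬ #(T.filter fun y => B x y) < d)) = n := by
        rw [hA, card_filter_add_card_filter_not, card_univ, Fintype.card_fin]
      have h5 : d * #(univ.filter (fun x => ¬ #(T.filter fun y => B x y) < d)) + d * #A
          = d * n := by
        rw [← Nat.mul_add, Nat.add_comm, h3]
      omega
    have key2 : (∑ x ∈ A, #(T.filter fun y => B x y)) + (∑ x ∈ A, #(Tᶜ.filter fun y => B x y))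
        = ∑ x ∈ A, degL B x := by
      rw [← Finset.sum_add_distrib]
      exact Finset.sum_congr rfl fun x _ => filter_split B T x
    have hDL : (#A:ℝ) * (r - 4*q) ≤ ∑ x ∈ A, (degL B x : ℝ) := by
      have h1 : ∑ _x ∈ A, (r - 4*q) ≤ ∑ x ∈ A, (degL B x:ℝ) :=
        Finset.sum_le_sum fun x _ => le_of_lt (hdegL x).1
      rw [Finset.sum_const, nsmul_eq_mul] at h1
      exact h1
    have hE'ub : (∑ x ∈ A, (#(Tᶜ.filter fun y => B x y):ℝ))
        ≤ (#(Tᶜ):ℝ) * (d:ℝ) + (#A:ℝ) * ((r-4*q)-(d:ℝ)) := by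
      by_cases hc : (#(Tᶜ):ℝ) * ((r+4*q)-(d:ℝ)) ≤ (#A:ℝ) * ((r-4*q)-(d:ℝ))
      · have h1 : (∑ x ∈ A, #(Tᶜ.filter fun y => B x y)) ≤ ∑ x, #(Tᶜ.filter fun y => B x y) :=
          Finset.sum_le_sum_of_subset (subset_univ A)
        have h2 : (∑ x, #(Tᶜ.filter fun y => B x y)) = ∑ y ∈ Tᶜ, degR B y := sum_eT_eq B Tᶜ
        have h3 : ∑ y ∈ Tᶜ, (degR B y:ℝ) ≤ (#(Tᶜ):ℝ) * (r + 4*q) := by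
          have h4 : ∑ y ∈ Tᶜ, (degR B y:ℝ) ≤ ∑ _y ∈ Tᶜ, (r + 4*q) :=
            Finset.sum_le_sum fun y _ => le_of_lt (hdegR y).2
          rw [Finset.sum_const, nsmul_eq_mul] at h4
          exact h4
        have h5 : (∑ x ∈ A, (#(Tᶜ.filter fun y => B x y):ℝ)) ≤ ∑ y ∈ Tᶜ, (degR B y:ℝ) := by
          have h6 := h1.trans (Nat.le_of_eq h2)
          exact_mod_cast h6
        have h7 : (#(Tᶜ):ℝ) * (r + 4*q)
            = (#(Tᶜ):ℝ) * (d:ℝ) + (#(Tᶜ):ℝ) * ((r+4*q)-(d:ℝ)) := by ring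
        linarith
      · push_neg at hc
        have ha' : (#A:ℝ) * (94*q) ≤ (#A:ℝ) * ((r-4*q)-(d:ℝ)) :=
          mul_le_mul_of_nonneg_left hgap1 ha0
        have hbc : (#(Tᶜ):ℝ) * ((r+4*q)-(d:ℝ)) ≤ (#(Tᶜ):ℝ) * (103*q) :=
          mul_le_mul_of_nonneg_left hgap2 hbn0
        have hab : (#A:ℝ) ≤ 1.096 * (#(Tᶜ):ℝ) := by nlinarith
        have ha06 : (#A:ℝ) ≤ 0.6 * n := by linarith
        have hbn06 : (#(Tᶜ):ℝ) ≤ 0.6 * n := by linarith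
        have hexpA := hexp A Tᶜ ha06 hbn06
        push_cast at hexpA
        have habn : (#A:ℝ) * (#(Tᶜ):ℝ) ≤ (1.047*(#(Tᶜ):ℝ))^2 := by nlinarith
        have hsq : Real.sqrt ((#A:ℝ) * (#(Tᶜ):ℝ)) ≤ 1.047*(#(Tᶜ):ℝ) := by
          calc Real.sqrt ((#A:ℝ)*(#(Tᶜ):ℝ)) ≤ Real.sqrt ((1.047*(#(Tᶜ):ℝ))^2) :=
            Real.sqrt_le_sqrt habn
          _ = 1.047*(#(Tᶜ):ℝ) := Real.sqrt_sq (by positivity)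
        have h6 : (∑ x ∈ A, (#(Tᶜ.filter fun y => B x y):ℝ)) ≤ 0.8*r*(1.047*(#(Tᶜ):ℝ)) :=
          hexpA.trans (mul_le_mul_of_nonneg_left hsq (by positivity))
        have h7 : 0.8*r*(1.047*(#(Tᶜ):ℝ)) ≤ (#(Tᶜ):ℝ)*(d:ℝ) := by
          linarith [mul_le_mul_of_nonneg_left hdlow hbn0, mul_nonneg hr0.le hbn0]
        have h8 : (0:ℝ) ≤ (#A:ℝ) * ((r-4*q)-(d:ℝ)) := mul_nonneg ha0 (by linarith)
        linarith [h6, h7, h8]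
    have keyR : (∑ x, min (d:ℝ) ((#(T.filter fun y => B x y)):ℝ)) + (d:ℝ) * (#A:ℝ)
        = (∑ x ∈ A, ((#(T.filter fun y => B x y)):ℝ)) + (d:ℝ) * (n:ℝ) := by
      exact_mod_cast key
    have key2R : (∑ x ∈ A, ((#(T.filter fun y => B x y)):ℝ))
        + (∑ x ∈ A, ((#(Tᶜ.filter fun y => B x y)):ℝ)) = ∑ x ∈ A, ((degL B x):ℝ) := by
      exact_mod_cast key2
    have e1 : (#A:ℝ)*((r-4*q)-(d:ℝ)) = (#A:ℝ)*(r-4*q) - (#A:ℝ)*(d:ℝ) := by ring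
    have e3 : (d:ℝ)*(#A:ℝ) = (#A:ℝ)*(d:ℝ) := by ring
    have e5 : (d:ℝ)*(#(Tᶜ):ℝ) + (d:ℝ)*(#T:ℝ) = (d:ℝ)*(n:ℝ) := by
      rw [← mul_add, hbnm]
    have e6 : (#(Tᶜ):ℝ)*(d:ℝ) = (d:ℝ)*(#(Tᶜ):ℝ) := by ring
    linarith [keyR, key2R, hDL, hE'ub, e1, e3, e5, e6]


lemma card_fiberR (v : Fin n) : #(univ.filter fun e : ET B => e.1.2 = v) = degR B v := by
  unfold degR
  refine card_bij' (fun (e : ET B) (_ : e ∈ univ.filter fun e : ET B => e.1.2 = v) => e.1.1)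
    (fun u hu => (⟨(u, v), by simpa using hu⟩ : ET B)) ?_ ?_ ?_ ?_
  · intro e he
    simp only [mem_filter, mem_univ, true_and] at he ⊢
    exact he ▸ e.2
  · intro u hu; exact mem_filter.mpr ⟨mem_univ _, rfl⟩
  · intro e he
    simp only [mem_filter, mem_univ, true_and] at he
    exact Subtype.ext (Prod.ext rfl he.symm)
  · intro u hu; rfl

lemma card_fiber_inT (x : Fin n) (T : Finset (Fin n)) :
    #(univ.filter fun e : ET B => e.1.1 = x ∧ e.1.2 ∈ T) = #(T.filter fun y => B x y) := by
  refine card_bij' (fun (e : ET B) (_ : e ∈ univ.filter fun e : ET B => e.1.1 = x ∧ e.1.2 ∈ T) => e.1.2)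
    (fun y hy => (⟨(x, y), (mem_filter.mp hy).2⟩ : ET B)) ?_ ?_ ?_ ?_
  · intro e he
    simp only [mem_filter, mem_univ, true_and] at he ⊢
    exact ⟨he.2, he.1 ▸ e.2⟩
  · intro y hy; exact mem_filter.mpr ⟨mem_univ _, rfl, (mem_filter.mp hy).1⟩
  · intro e he
    simp only [mem_filter, mem_univ, true_and] at he
    exact Subtype.ext (Prod.ext he.1.symm rfl)
  · intro y hy; rfl

noncomputable instance : DecidableEq (ET B) := Classical.decEq _

noncomputable def tfun : (ET B) ⊕ (Σ y : Fin n, Fin (degR B y - d)) → Finset ((ET B) ⊕ (Σ x : Fin n, Fin (degL B x - d)))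
  | Sum.inl e => insert (Sum.inl e)
      ((univ.filter fun c : Σ x : Fin n, Fin (degL B x - d) => c.1 = e.1.1).image Sum.inr)
  | Sum.inr c => (univ.filter fun e : ET B => e.1.2 = c.1).image Sum.inl

set_option maxHeartbeats 1000000 in
lemma hall_cond (hdx : ∀ u, d ≤ degL B u) (hdy : ∀ v, d ≤ degR B v)
    (orc : ∀ T : Finset (Fin n), d * #T ≤ ∑ x, min d #(T.filter fun y => B x y))
    (s : Finset ((ET B) ⊕ (Σ y : Fin n, Fin (degR B y - d)))) : #s ≤ #(s.biUnion (tfun B d)) := by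
  set N := s.biUnion (tfun B d) with hN
  set P : Finset (ET B) := univ.filter (fun e => (Sum.inl e : (ET B) ⊕ (Σ y : Fin n, Fin (degR B y - d))) ∈ s) with hP
  set T : Finset (Fin n) := univ.filter (fun y => ∃ j : Fin (degR B y - d), (Sum.inr ⟨y, j⟩ : (ET B) ⊕ (Σ y : Fin n, Fin (degR B y - d))) ∈ s) with hT
  set U : Finset (Fin n) := univ.filter (fun x => ∃ e ∈ P, (e : ET B).1.1 = x) with hU
  set P' : Finset (ET B) := univ.filter (fun e => (e : ET B).1.2 ∈ T) with hP'
  set W : Finset (ET B) := univ.filter (fun e => (Sum.inl e : (ET B) ⊕ (Σ x : Fin n, Fin (degL B x - d))) ∈ N) with hW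
  -- counting the left set s
  have hsub : s ⊆ P.image Sum.inl ∪ (T.sigma fun y => (univ : Finset (Fin (degR B y - d)))).image Sum.inr := by
    intro w hw
    rcases w with e | c
    · exact mem_union_left _ (mem_image_of_mem _ (by simp [hP, hw]))
    · refine mem_union_right _ (mem_image_of_mem _ ?_)
      rcases c with ⟨y, j⟩
      simp only [mem_sigma, mem_univ, and_true]
      simp only [hT, mem_filter, mem_univ, true_and]
      exact ⟨j, hw⟩
  have hcard_s : #s ≤ #P + ∑ y ∈ T, (degR B y - d) := by
    calc #s ≤ #(P.image (Sum.inl : ET B → (ET B) ⊕ (Σ y : Fin n, Fin (degR B y - d))) ∪ (T.sigma fun y => (univ : Finset (Fin (degR B y - d)))).image Sum.inr) := card_le_card hsub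
    _ ≤ #(P.image (Sum.inl : ET B → (ET B) ⊕ (Σ y : Fin n, Fin (degR B y - d)))) + #((T.sigma fun y => (univ : Finset (Fin (degR B y - d)))).image Sum.inr) := card_union_le _ _
    _ = #P + ∑ y ∈ T, (degR B y - d) := by
        rw [card_image_of_injective _ Sum.inl_injective, card_image_of_injective _ Sum.inr_injective,
          card_sigma]
        simp
  -- lower bounds for N
  have hWP : P ⊆ W := by
    intro e he
    simp only [hW, mem_filter, mem_univ, true_and, hN]
    exact mem_biUnion.mpr ⟨Sum.inl e, (mem_filter.mp he).2, by simp [tfun]⟩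
  have hWP' : P' ⊆ W := by
    intro e he
    have hyT := (mem_filter.mp he).2
    rw [hT, mem_filter] at hyT
    obtain ⟨j, hj⟩ := hyT.2
    simp only [hW, mem_filter, mem_univ, true_and, hN]
    refine mem_biUnion.mpr ⟨Sum.inr ⟨(e : ET B).1.2, j⟩, hj, ?_⟩
    simp only [tfun, mem_image]
    exact ⟨e, by simp, rfl⟩
  have hWcard : #P + #P' ≤ #W + #(P ∩ P') := by
    have : #(P ∪ P') ≤ #W := card_le_card (union_subset hWP hWP')
    have h2 := card_union_add_card_inter P P'
    omega
  set CU : Finset (Σ x : Fin n, Fin (degL B x - d)) := U.sigma (fun x => univ) with hCU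
  have hCUN : CU.image Sum.inr ⊆ N := by
    intro w hw
    obtain ⟨c, hc, rfl⟩ := mem_image.mp hw
    have hcU : c.1 ∈ U := (mem_sigma.mp hc).1
    rw [hU, mem_filter] at hcU
    obtain ⟨e, heP, hex⟩ := hcU.2
    refine mem_biUnion.mpr ⟨Sum.inl e, (mem_filter.mp heP).2, ?_⟩
    simp only [tfun]
    refine mem_insert_of_mem (mem_image_of_mem _ ?_)
    simp [hex]
  have hNcard : #W + ∑ x ∈ U, (degL B x - d) ≤ #N := by
    have hdisj : Disjoint (W.image (Sum.inl : ET B → (ET B) ⊕ (Σ x : Fin n, Fin (degL B x - d)))) (CU.image Sum.inr) := by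
      simp only [disjoint_left, mem_image]
      rintro a ⟨e, _, rfl⟩ ⟨c, _, h⟩
      exact Sum.inl_ne_inr h.symm
    have hsubN : W.image (Sum.inl : ET B → (ET B) ⊕ (Σ x : Fin n, Fin (degL B x - d))) ∪ CU.image Sum.inr ⊆ N := by
      refine union_subset ?_ hCUN
      intro w hw
      obtain ⟨e, he, rfl⟩ := mem_image.mp hw
      exact (mem_filter.mp he).2
    calc #W + ∑ x ∈ U, (degL B x - d)
        = #(W.image (Sum.inl : ET B → (ET B) ⊕ (Σ x : Fin n, Fin (degL B x - d)))) + #(CU.image Sum.inr) := by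
          rw [card_image_of_injective _ Sum.inl_injective, card_image_of_injective _ Sum.inr_injective,
            hCU, card_sigma]
          simp
    _ = #(W.image (Sum.inl : ET B → (ET B) ⊕ (Σ x : Fin n, Fin (degL B x - d))) ∪ CU.image Sum.inr) := (card_union_of_disjoint hdisj).symm
    _ ≤ #N := card_le_card hsubN
  -- #P' = ∑_{y ∈ T} degR y
  have hP'card : #P' = ∑ y ∈ T, degR B y := by
    rw [card_eq_sum_card_fiberwise (f := fun e : ET B => (e : ET B).1.2) (s := P') (t := T)
      (fun e he => (mem_filter.mp he).2)]
    refine Finset.sum_congr rfl fun y hy => ?_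
    rw [← card_fiberR B y]
    congr 1
    ext e
    simp only [hP', mem_filter, mem_univ, true_and]
    constructor
    · rintro ⟨_, h⟩; exact h
    · rintro h; exact ⟨h ▸ hy, h⟩
  -- #(P ∩ P') ≤ ∑_{x ∈ U} e(x, T)
  have hPPcard : #(P ∩ P') ≤ ∑ x ∈ U, #(T.filter fun y => B x y) := by
    have hsubQ : P ∩ P' ⊆ univ.filter (fun e : ET B => (e : ET B).1.1 ∈ U ∧ (e : ET B).1.2 ∈ T) := by
      intro e he
      rw [mem_inter] at he
      simp only [mem_filter, mem_univ, true_and]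
      constructor
      · rw [hU, mem_filter]; exact ⟨mem_univ _, ⟨e, he.1, rfl⟩⟩
      · exact (mem_filter.mp he.2).2
    refine (card_le_card hsubQ).trans ?_
    rw [card_eq_sum_card_fiberwise (f := fun e : ET B => (e : ET B).1.1) (t := U)
      (fun e he => (mem_filter.mp he).2.1)]
    refine Finset.sum_le_sum fun x hx => ?_
    rw [← card_fiber_inT B x T]
    refine card_le_card ?_
    intro e he
    simp only [mem_filter, mem_univ, true_and] at he ⊢
    exact ⟨he.2, he.1.2⟩
  -- key inequality from orc
  have eTc_def : ∀ x, #(Tᶜ.filter fun y => B x y) + #(T.filter fun y => B x y) = degL B x := by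
    intro x
    unfold degL
    rw [← card_union_of_disjoint, ← filter_union]
    · rw [union_comm, union_compl]
    · exact disjoint_filter_filter (disjoint_compl_left)
  have hkey : d * #U ≤ d * #T + ∑ x ∈ U, #(Tᶜ.filter fun y => B x y) := by
    have h1 : d * #U ≤ ∑ x ∈ U, (#(Tᶜ.filter fun y => B x y) + (d - min d #(Tᶜ.filter fun y => B x y))) := by
      rw [mul_comm, ← smul_eq_mul, ← Finset.sum_const]
      exact Finset.sum_le_sum fun x _ => by omega
    rw [Finset.sum_add_distrib] at h1
    have h2 : ∑ x ∈ U, (d - min d #(Tᶜ.filter fun y => B x y)) ≤ ∑ x, (d - min d #(Tᶜ.filter fun y => B x y)) :=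
      Finset.sum_le_sum_of_subset (subset_univ U)
    have h3 : ∑ x, (d - min d #(Tᶜ.filter fun y => B x y)) = d * n - ∑ x, min d #(Tᶜ.filter fun y => B x y) := by
      rw [sum_tsub_distrib _ (fun x _ => min_le_left _ _)]
      congr 1
      simp [Finset.card_univ]
      ring
    have h4 := orc Tᶜ
    have h5 : d * #(Tᶜ) + d * #T = d * n := by
      rw [← Nat.mul_add]
      congr 1
      rw [card_compl]
      simp only [Fintype.card_fin]
      have : #T ≤ n := by simpa using card_le_card (subset_univ T)
      omega
    have h6 : #T ≤ n := by simpa using card_le_card (subset_univ T)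
    have h7 : ∑ x, min d #(Tᶜ.filter fun y => B x y) ≤ d * n := by
      calc ∑ x, min d #(Tᶜ.filter fun y => B x y) ≤ ∑ _x : Fin n, d := Finset.sum_le_sum fun x _ => min_le_left _ _
      _ = d * n := by simp [mul_comm]
    omega
  -- final arithmetic over ℤ
  have hTd : ∑ y ∈ T, (degR B y - d) = ∑ y ∈ T, degR B y - d * #T := by
    rw [sum_tsub_distrib _ (fun y _ => hdy y)]
    congr 1
    rw [Finset.sum_const, smul_eq_mul, mul_comm]
  have hUd : ∑ x ∈ U, (degL B x - d) = ∑ x ∈ U, degL B x - d * #U := by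
    rw [sum_tsub_distrib _ (fun x _ => hdx x)]
    congr 1
    rw [Finset.sum_const, smul_eq_mul, mul_comm]
  have hTle : d * #T ≤ ∑ y ∈ T, degR B y := by
    calc d * #T = ∑ _y ∈ T, d := by rw [Finset.sum_const, smul_eq_mul, mul_comm]
    _ ≤ ∑ y ∈ T, degR B y := Finset.sum_le_sum fun y _ => hdy y
  have hUle : d * #U ≤ ∑ x ∈ U, degL B x := by
    calc d * #U = ∑ _x ∈ U, d := by rw [Finset.sum_const, smul_eq_mul, mul_comm]
    _ ≤ ∑ x ∈ U, degL B x := Finset.sum_le_sum fun x _ => hdx x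
  have hsplit : ∑ x ∈ U, #(T.filter fun y => B x y) + ∑ x ∈ U, #(Tᶜ.filter fun y => B x y) = ∑ x ∈ U, degL B x := by
    rw [← Finset.sum_add_distrib]
    exact Finset.sum_congr rfl fun x _ => by rw [add_comm]; exact eTc_def x
  omega

lemma mem_tfun_inl {e : ET B} {w} (h : w ∈ tfun B d (Sum.inl e)) :
    w = Sum.inl e ∨ ∃ c : Σ x : Fin n, Fin (degL B x - d), c.1 = e.1.1 ∧ w = Sum.inr c := by
  simp only [tfun, mem_insert, mem_image, mem_filter, mem_univ, true_and] at h
  rcases h with h | ⟨c, hc, rfl⟩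
  · exact Or.inl h
  · exact Or.inr ⟨c, hc, rfl⟩

lemma mem_tfun_inr {c : Σ y : Fin n, Fin (degR B y - d)} {w} (h : w ∈ tfun B d (Sum.inr c)) :
    ∃ e : ET B, e.1.2 = c.1 ∧ w = Sum.inl e := by
  simp only [tfun, mem_image, mem_filter, mem_univ, true_and] at h
  obtain ⟨e, he, rfl⟩ := h
  exact ⟨e, he, rfl⟩

lemma card_LR (hdx : ∀ u, d ≤ degL B u) (hdy : ∀ v, d ≤ degR B v)
    (hE : ∑ u, degL B u = ∑ v, degR B v) :
    Fintype.card ((ET B) ⊕ (Σ y : Fin n, Fin (degR B y - d)))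
      = Fintype.card ((ET B) ⊕ (Σ x : Fin n, Fin (degL B x - d))) := by
  rw [Fintype.card_sum, Fintype.card_sum, Fintype.card_sigma, Fintype.card_sigma]
  simp only [Fintype.card_fin]
  rw [sum_tsub_distrib _ (fun x _ => hdy x), sum_tsub_distrib _ (fun x _ => hdx x), hE]

lemma card_fiberL (u : Fin n) : #(univ.filter fun e : ET B => e.1.1 = u) = degL B u := by
  unfold degL
  refine card_bij' (fun (e : ET B) (_ : e ∈ univ.filter fun e : ET B => e.1.1 = u) => e.1.2)
    (fun v hv => (⟨(u, v), by simpa using hv⟩ : ET B)) ?_ ?_ ?_ ?_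
  · intro e he
    simp only [mem_filter, mem_univ, true_and] at he ⊢
    exact he ▸ e.2
  · intro v hv; exact mem_filter.mpr ⟨mem_univ _, rfl⟩
  · intro e he
    simp only [mem_filter, mem_univ, true_and] at he
    exact Subtype.ext (Prod.ext he.symm rfl)
  · intro v hv; rfl

lemma card_ET_L : Fintype.card (ET B) = ∑ u, degL B u := by
  rw [← card_univ]
  rw [card_eq_sum_card_fiberwise (f := fun e : ET B => e.1.1) (t := univ) (fun x _ => mem_univ _)]
  exact Finset.sum_congr rfl fun u _ => card_fiberL B u

lemma card_ET_R : Fintype.card (ET B) = ∑ v, degR B v := by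
  rw [← card_univ]
  rw [card_eq_sum_card_fiberwise (f := fun e : ET B => e.1.2) (t := univ) (fun x _ => mem_univ _)]
  exact Finset.sum_congr rfl fun v _ => card_fiberR B v

lemma exists_dfactor (hdx : ∀ u, d ≤ degL B u) (hdy : ∀ v, d ≤ degR B v)
    (orc : ∀ T : Finset (Fin n), d * #T ≤ ∑ x, min d #(T.filter fun y => B x y)) :
    ∃ M : Fin n → Fin n → Prop, (∀ u v, M u v → B u v) ∧
      (∀ u, Set.ncard {v | M u v} = d) ∧
      (∀ v, Set.ncard {u | M u v} = d) := by
  obtain ⟨f, hfinj, hft⟩ := (Finset.all_card_le_biUnion_card_iff_exists_injective (tfun B d)).mp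
    (hall_cond B d hdx hdy orc)
  have hbij : Function.Bijective f := (Fintype.bijective_iff_injective_and_card f).mpr
    ⟨hfinj, card_LR B d hdx hdy ((card_ET_L B).symm.trans (card_ET_R B))⟩
  classical
  set Fset : Finset (Fin n × Fin n) :=
    (univ.filter (fun e : ET B => f (Sum.inl e) = Sum.inl e)).image (fun e => (e : ET B).1)
    with hFset
  refine ⟨fun u v => (u, v) ∈ Fset, ?_, ?_, ?_⟩
  · intro u v huv
    rw [hFset, mem_image] at huv
    obtain ⟨e, -, heq⟩ := huv
    have h2 := e.2
    rw [heq] at h2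
    exact h2
  · -- left degrees
    intro u
    set Fib := univ.filter (fun e : ET B => e.1.1 = u) with hFib
    set Bad := Fib.filter (fun e => f (Sum.inl e) ≠ Sum.inl e) with hBad
    set Good := Fib.filter (fun e => f (Sum.inl e) = Sum.inl e) with hGood
    have hsplit : #Good + #Bad = degL B u := by
      rw [hGood, hBad, card_filter_add_card_filter_not, ← card_fiberL B u]
    have hBadcard : #Bad = degL B u - d := by
      have himg : Bad.image (fun e => f (Sum.inl e))
          = (univ.filter (fun c : Σ x : Fin n, Fin (degL B x - d) => c.1 = u)).image Sum.inr := by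
        ext w
        simp only [mem_image]
        constructor
        · rintro ⟨e, he, rfl⟩
          rw [hBad, mem_filter, hFib, mem_filter] at he
          rcases mem_tfun_inl B d (hft (Sum.inl e)) with h | ⟨c, hc, hw⟩
          · exact absurd h he.2
          · exact ⟨c, by simp [hc, he.1.2], hw.symm⟩
        · rintro ⟨c, hc, rfl⟩
          simp only [mem_filter, mem_univ, true_and] at hc
          obtain ⟨w, hw⟩ := hbij.2 (Sum.inr c)
          rcases w with e | c'
          · have hmem := mem_tfun_inl B d (hft (Sum.inl e))
            rw [hw] at hmem
            have he1 : (e : ET B).1.1 = u := by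
              rcases hmem with h | ⟨c'', hc'', h⟩
              · exact absurd h (by simp)
              · rw [← Sum.inr_injective h] at hc''
                exact hc''.symm.trans hc
            refine ⟨e, ?_, hw⟩
            rw [hBad, mem_filter, hFib, mem_filter]
            refine ⟨⟨mem_univ _, he1⟩, ?_⟩
            rw [hw]; simp
          · obtain ⟨e, -, habs⟩ := mem_tfun_inr B d (hft (Sum.inr c'))
            rw [hw] at habs
            exact absurd habs (by simp)
      have hinj' : Function.Injective (fun e : ET B => f (Sum.inl e)) :=
        fun a b h => Sum.inl_injective (hfinj h)
      rw [← card_image_of_injective Bad hinj', himg,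
        card_image_of_injective _ Sum.inr_injective]
      have : (univ.filter (fun c : Σ x : Fin n, Fin (degL B x - d) => c.1 = u))
          = ({u} : Finset (Fin n)).sigma (fun x => univ) := by
        ext c; simp [Sigma.ext_iff]
      rw [this, card_sigma]
      simp
    have hGoodcard : #Good = d := by have := hdx u; omega
    have himg2 : univ.filter (fun v => (u, v) ∈ Fset) = Good.image (fun e => (e : ET B).1.2) := by
      ext v
      simp only [mem_filter, mem_univ, true_and, mem_image, hFset]
      constructor
      · rintro ⟨e, hfe, heq⟩
        refine ⟨e, ?_, congrArg Prod.snd heq⟩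
        rw [hGood, mem_filter, hFib, mem_filter]
        exact ⟨⟨mem_univ _, congrArg Prod.fst heq⟩, hfe⟩
      · rintro ⟨e, he, rfl⟩
        rw [hGood, mem_filter, hFib, mem_filter] at he
        exact ⟨e, he.2, Prod.ext he.1.2 rfl⟩
    have hgoal : #(filter (fun v => (u, v) ∈ Fset) univ) = d := by
      rw [himg2, card_image_of_injOn, hGoodcard]
      intro e1 h1 e2 h2 heq
      rw [Finset.mem_coe, hGood, mem_filter, hFib, mem_filter] at h1 h2
      exact Subtype.ext (Prod.ext (h1.1.2.trans h2.1.2.symm) heq)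
    have hset : {v | (u, v) ∈ Fset} = ↑(filter (fun v => (u, v) ∈ Fset) univ) := by
      ext v; simp
    show Set.ncard {v | (u, v) ∈ Fset} = d
    rw [hset, Set.ncard_coe_finset]
    exact hgoal
  · -- right degrees
    intro v
    set Fib := univ.filter (fun e : ET B => e.1.2 = v) with hFib
    set Bad := Fib.filter (fun e => f (Sum.inl e) ≠ Sum.inl e) with hBad
    set Good := Fib.filter (fun e => f (Sum.inl e) = Sum.inl e) with hGood
    have hsplit : #Good + #Bad = degR B v := by
      rw [hGood, hBad, card_filter_add_card_filter_not, ← card_fiberR B v]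
    have hBadcard : #Bad = degR B v - d := by
      have himg : (univ.filter (fun c : Σ y : Fin n, Fin (degR B y - d) => c.1 = v)).image
          (fun c => f (Sum.inr c)) = Bad.image Sum.inl := by
        ext w
        simp only [mem_image]
        constructor
        · rintro ⟨c, hc, rfl⟩
          simp only [mem_filter, mem_univ, true_and] at hc
          obtain ⟨e, he2, hw⟩ := mem_tfun_inr B d (hft (Sum.inr c))
          refine ⟨e, ?_, hw.symm⟩
          rw [hBad, mem_filter, hFib, mem_filter]
          refine ⟨⟨mem_univ _, hc ▸ he2⟩, fun habs => ?_⟩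
          have : f (Sum.inl e) = f (Sum.inr c) := by rw [habs, hw]
          exact absurd (hfinj this) (by simp)
        · rintro ⟨e, he, rfl⟩
          rw [hBad, mem_filter, hFib, mem_filter] at he
          obtain ⟨w, hw⟩ := hbij.2 (Sum.inl e)
          rcases w with e' | c
          · rcases mem_tfun_inl B d (hft (Sum.inl e')) with h | ⟨c'', hc'', h⟩
            · rw [hw] at h
              have heq : e = e' := Sum.inl_injective h
              rw [← heq] at hw
              exact absurd hw he.2
            · rw [hw] at h; exact absurd h (by simp)
          · obtain ⟨e', he2', hw'⟩ := mem_tfun_inr B d (hft (Sum.inr c))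
            rw [hw] at hw'
            have : e' = e := Sum.inl_injective hw'.symm
            subst this
            refine ⟨c, ?_, hw⟩
            simp only [mem_filter, mem_univ, true_and]
            rw [← he2', he.1.2]
      have hinj' : Function.Injective (fun c : Σ y : Fin n, Fin (degR B y - d) => f (Sum.inr c)) :=
        fun a b h => Sum.inr_injective (hfinj h)
      have h1 : #((univ.filter (fun c : Σ y : Fin n, Fin (degR B y - d) => c.1 = v)).image
          (fun c => f (Sum.inr c))) = degR B v - d := by
        rw [card_image_of_injective _ hinj']
        have : (univ.filter (fun c : Σ y : Fin n, Fin (degR B y - d) => c.1 = v))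
            = ({v} : Finset (Fin n)).sigma (fun y => univ) := by
          ext c; simp [Sigma.ext_iff]
        rw [this, card_sigma]
        simp
      rw [← h1, himg]
      exact (card_image_of_injective Bad Sum.inl_injective).symm
    have hGoodcard : #Good = d := by have := hdy v; omega
    have himg2 : univ.filter (fun u => (u, v) ∈ Fset) = Good.image (fun e => (e : ET B).1.1) := by
      ext u
      simp only [mem_filter, mem_univ, true_and, mem_image, hFset]
      constructor
      · rintro ⟨e, hfe, heq⟩
        refine ⟨e, ?_, congrArg Prod.fst heq⟩
        rw [hGood, mem_filter, hFib, mem_filter]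
        exact ⟨⟨mem_univ _, congrArg Prod.snd heq⟩, hfe⟩
      · rintro ⟨e, he, rfl⟩
        rw [hGood, mem_filter, hFib, mem_filter] at he
        exact ⟨e, he.2, Prod.ext rfl he.1.2⟩
    have hgoal : #(filter (fun u => (u, v) ∈ Fset) univ) = d := by
      rw [himg2, card_image_of_injOn, hGoodcard]
      intro e1 h1 e2 h2 heq
      rw [Finset.mem_coe, hGood, mem_filter, hFib, mem_filter] at h1 h2
      exact Subtype.ext (Prod.ext heq (h1.1.2.trans h2.1.2.symm))
    have hset : {u | (u, v) ∈ Fset} = ↑(filter (fun u => (u, v) ∈ Fset) univ) := by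
      ext u; simp
    show Set.ncard {u | (u, v) ∈ Fset} = d
    rw [hset, Set.ncard_coe_finset]
    exact hgoal



end OreRyserAux

open OreRyserAux Finset in
open scoped Classical in
/-- for sufficiently large `n`, `r ≥ (ln ln n)²`, any bipartite graph
with parts of size `n` whose degrees all lie strictly between `r − 4r/ln ln n` and
`r + 4r/ln ln n`, and in which any two sets `A ⊆ X`, `B ⊆ Y` of size at most `0.6n`
span at most `0.8 r √(|A||B|)` edges, contains a spanning `k`-regular subgraph for
some `k ≥ r − 100r/ln ln n`. -/
theorem ore_ryser_regular_subgraph :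
    ∃ N : ℕ, ∀ n : ℕ, N ≤ n → ∀ r : ℝ, (Real.log (Real.log n)) ^ 2 ≤ r →
    ∀ B : Fin n → Fin n → Prop,
    (∀ u : Fin n,
        r - 4 * r / Real.log (Real.log n) < (Set.ncard {v | B u v} : ℝ) ∧
        (Set.ncard {v | B u v} : ℝ) < r + 4 * r / Real.log (Real.log n)) →
    (∀ v : Fin n,
        r - 4 * r / Real.log (Real.log n) < (Set.ncard {u | B u v} : ℝ) ∧
        (Set.ncard {u | B u v} : ℝ) < r + 4 * r / Real.log (Real.log n)) →
    (∀ A B' : Finset (Fin n), (A.card : ℝ) ≤ 0.6 * n → (B'.card : ℝ) ≤ 0.6 * n →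
        (bipEdges B A B' : ℝ) ≤ 0.8 * r * Real.sqrt ((A.card : ℝ) * (B'.card : ℝ))) →
    ∃ (k : ℕ) (M : Fin n → Fin n → Prop),
      r - 100 * r / Real.log (Real.log n) ≤ (k : ℝ) ∧
      (∀ u v, M u v → B u v) ∧
      (∀ u : Fin n, Set.ncard {v | M u v} = k) ∧
      (∀ v : Fin n, Set.ncard {u | M u v} = k) := by
  refine ⟨max 10 ⌈Real.exp (Real.exp (10^6))⌉₊, ?_⟩
  intro n hn r hr B hX hY hExp
  set L := Real.log (Real.log n) with hLdef
  have hn10 : (10:ℝ) ≤ (n:ℝ) := by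
    have h1 : 10 ≤ n := le_trans (le_max_left _ _) hn
    exact_mod_cast h1
  have hnE : Real.exp (Real.exp (10^6)) ≤ (n:ℝ) := by
    have h1 : ⌈Real.exp (Real.exp (10^6))⌉₊ ≤ n := le_trans (le_max_right _ _) hn
    exact le_trans (Nat.le_ceil _) (by exact_mod_cast h1)
  have hL6 : (10^6:ℝ) ≤ L := by
    have h1 : Real.exp (10^6) ≤ Real.log n := by
      calc Real.exp (10^6) = Real.log (Real.exp (Real.exp (10^6))) := (Real.log_exp _).symm
      _ ≤ Real.log n := Real.log_le_log (Real.exp_pos _) hnE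
    calc (10^6:ℝ) = Real.log (Real.exp (10^6)) := (Real.log_exp _).symm
    _ ≤ Real.log (Real.log n) := Real.log_le_log (Real.exp_pos _) h1
  have hL0 : (0:ℝ) < L := by linarith
  have hr0 : (0:ℝ) < r := by nlinarith
  have hq0 : (0:ℝ) < r / L := div_pos hr0 hL0
  have hqL : (r/L) * L = r := div_mul_cancel₀ r (ne_of_gt hL0)
  have hq1 : 103 * (r/L) ≤ 0.001 * r := by nlinarith
  have hq2 : (1:ℝ) ≤ r/L := by nlinarith
  have emd : ∀ c : ℝ, c * r / L = c * (r/L) := fun c => mul_div_assoc c r L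
  have hdegL : ∀ u, r - 4*(r/L) < (degL B u : ℝ) ∧ (degL B u : ℝ) < r + 4*(r/L) := by
    intro u
    have h := hX u
    rw [ncard_degL] at h
    constructor <;> [linarith [emd 4, h.1]; linarith [emd 4, h.2]]
  have hdegR : ∀ v, r - 4*(r/L) < (degR B v : ℝ) ∧ (degR B v : ℝ) < r + 4*(r/L) := by
    intro v
    have h := hY v
    rw [ncard_degR] at h
    constructor <;> [linarith [emd 4, h.1]; linarith [emd 4, h.2]]
  set d := ⌈r - 99*(r/L)⌉₊ with hd
  have hd1 : r - 99*(r/L) ≤ (d:ℝ) := Nat.le_ceil _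
  have hd2 : (d:ℝ) ≤ r - 98*(r/L) := by
    have h1 : (d:ℝ) < (r - 99*(r/L)) + 1 := Nat.ceil_lt_add_one (by nlinarith)
    linarith
  have hdx : ∀ u, d ≤ degL B u := by
    intro u
    rw [← @Nat.cast_le ℝ]
    have h := (hdegL u).1
    linarith
  have hdy : ∀ v, d ≤ degR B v := by
    intro v
    rw [← @Nat.cast_le ℝ]
    have h := (hdegR v).1
    linarith
  have hexp' : ∀ A B' : Finset (Fin n), (#A : ℝ) ≤ 0.6*n → (#B' : ℝ) ≤ 0.6*n →
      ((∑ x ∈ A, #(B'.filter fun y => B x y) : ℕ) : ℝ)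
        ≤ 0.8*r*Real.sqrt ((#A) * (#B')) := by
    intro A B' hA hB
    have h := hExp A B' (by linarith) (by linarith)
    rw [bipEdges_eq] at h
    exact h
  have orc := orc_main B r L d hn10 hL6 hr hd1 hd2 hdegL hdegR hexp'
  obtain ⟨M, hMB, hMl, hMr⟩ := exists_dfactor B d hdx hdy orc
  refine ⟨d, M, ?_, hMB, hMl, hMr⟩
  linarith [emd 100, emd 99, hq0]
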